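/- Let β > 1, k₀ ∈ ℕ with k₀ ≥ 1, and let ψ : [t₀, 2k₀+1] → ℝ satisfy ψ(t₀) = 1 and the differential inequality ψ'(t) < ψ(t)/(t+1) - ψ(t)³/(β²(t+1)) with 0 < ψ ≤ β. Then for all t ∈ [t₀, 2k₀+1], ψ(t) ≤ 1/√(1/β² + (1 - 1/β²)·(t₀+1)²/(t+1)²). -/

import Mathlib

open Real

theorem stmt_8 (β : ℝ) (hβ : 1 < β) (k₀ : ℕ) (hk₀ : 1 ≤ k₀)
    (t₀ : ℝ) (ht₀ : 0 < t₀) (ht₀' : t₀ ≤ 2 * (k₀ : ℝ) + 1)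
    (ψ ψ' : ℝ → ℝ)
    (hinit : ψ t₀ = 1)
    (hpos : ∀ t ∈ Set.Icc t₀ (2 * (k₀ : ℝ) + 1), 0 < ψ t ∧ ψ t ≤ β)
    (hderiv : ∀ t ∈ Set.Icc t₀ (2 * (k₀ : ℝ) + 1), HasDerivAt ψ (ψ' t) t)
    (hineq : ∀ t ∈ Set.Icc t₀ (2 * (k₀ : ℝ) + 1),
      ψ' t < ψ t / (t + 1) - (ψ t) ^ 3 / (β ^ 2 * (t + 1))) :
    ∀ t ∈ Set.Icc t₀ (2 * (k₀ : ℝ) + 1),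
      ψ t ≤ 1 / Real.sqrt (1 / β ^ 2
        + (1 - 1 / β ^ 2) * (t₀ + 1) ^ 2 / (t + 1) ^ 2) := by
  set T : ℝ := 2 * (k₀ : ℝ) + 1 with hT
  have hβ0 : (0:ℝ) < β := lt_trans one_pos hβ
  set w : ℝ → ℝ := fun s => (s + 1) ^ 2 * (((ψ s) ^ 2)⁻¹ - 1 / β ^ 2) with hw
  -- derivative of w on the interval
  have hwderiv : ∀ s ∈ Set.Icc t₀ T, HasDerivAt w
      (2 * (s + 1) * (((ψ s) ^ 2)⁻¹ - 1 / β ^ 2)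
        + (s + 1) ^ 2 * (-(2 * ψ s * ψ' s) / ((ψ s) ^ 2) ^ 2)) s := by
    intro s hs
    have hψ0 : 0 < ψ s := (hpos s hs).1
    have h1 : HasDerivAt (fun x : ℝ => (x + 1) ^ 2) (2 * (s + 1)) s := by
      have := ((hasDerivAt_id s).add_const 1).pow 2
      simp at this; exact this
    have h2 : HasDerivAt (fun x : ℝ => ((ψ x) ^ 2)⁻¹ - 1 / β ^ 2)
        (-(2 * ψ s * ψ' s) / ((ψ s) ^ 2) ^ 2) s := by
      have hp : HasDerivAt (fun x => (ψ x) ^ 2) (2 * ψ s * ψ' s) s := by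
        have := (hderiv s hs).pow 2
        simp [mul_comm, mul_assoc, mul_left_comm] at this; rw [show 2 * ψ s * ψ' s = ψ s * (ψ' s * 2) by ring]; exact this
      have := (hp.inv (by positivity)).sub_const (1 / β ^ 2)
      simpa [neg_div] using this
    have := h1.mul h2
    exact this
  have hcont : ContinuousOn w (Set.Icc t₀ T) := fun s hs =>
    (hwderiv s hs).continuousAt.continuousWithinAt
  -- the derivative is positive on the interior
  have hmono : StrictMonoOn w (Set.Icc t₀ T) := by
    apply strictMonoOn_of_deriv_pos (convex_Icc t₀ T) hcont
    intro s hs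
    rw [interior_Icc] at hs
    have hs' : s ∈ Set.Icc t₀ T := Set.mem_Icc.2 ⟨le_of_lt hs.1, le_of_lt hs.2⟩
    have hψ0 : 0 < ψ s := (hpos s hs').1
    have hs1 : 0 < s + 1 := by linarith [hs.1]
    have hd := hwderiv s hs'
    rw [hd.deriv]
    have hi := hineq s hs'
    have heq : 2 * (s + 1) * (((ψ s) ^ 2)⁻¹ - 1 / β ^ 2)
        + (s + 1) ^ 2 * (-(2 * ψ s * ψ' s) / ((ψ s) ^ 2) ^ 2)
        = 2 * (s + 1) / ((ψ s) ^ 3 * β ^ 2)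
          * (ψ s * (β ^ 2 - (ψ s) ^ 2) - (s + 1) * β ^ 2 * ψ' s) := by
      field_simp
      ring
    rw [heq]
    have hbr : 0 < ψ s * (β ^ 2 - (ψ s) ^ 2) - (s + 1) * β ^ 2 * ψ' s := by
      have h2 : ψ s * (β ^ 2 - (ψ s) ^ 2) - (s + 1) * β ^ 2 * ψ' s
          = (s + 1) * β ^ 2
            * (ψ s / (s + 1) - (ψ s) ^ 3 / (β ^ 2 * (s + 1)) - ψ' s) := by
        field_simp
      rw [h2]
      have : 0 < ψ s / (s + 1) - (ψ s) ^ 3 / (β ^ 2 * (s + 1)) - ψ' s := by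
        linarith
      positivity
    positivity
  -- conclude
  intro t ht
  have hψt : 0 < ψ t := (hpos t ht).1
  have ht1 : 0 < t + 1 := by linarith [ht.1]
  have ht01 : 0 < t₀ + 1 := by linarith
  have hwle : w t₀ ≤ w t := by
    rcases eq_or_lt_of_le ht.1 with h | h
    · rw [h]
    · exact le_of_lt (hmono (Set.left_mem_Icc.2 ht₀') ht h)
  have hwt₀ : w t₀ = (t₀ + 1) ^ 2 * (1 - 1 / β ^ 2) := by
    simp [hw, hinit]
  have hβ2 : (0:ℝ) < 1 - 1 / β ^ 2 := by
    have : 1 / β ^ 2 < 1 := by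
      rw [div_lt_one (by positivity)]
      nlinarith
    linarith
  set D : ℝ := 1 / β ^ 2 + (1 - 1 / β ^ 2) * (t₀ + 1) ^ 2 / (t + 1) ^ 2 with hD
  have hD0 : 0 < D := by positivity
  have hDle : D ≤ ((ψ t) ^ 2)⁻¹ := by
    have h1 : (1 - 1 / β ^ 2) * (t₀ + 1) ^ 2 / (t + 1) ^ 2
        ≤ ((ψ t) ^ 2)⁻¹ - 1 / β ^ 2 := by
      rw [div_le_iff₀ (by positivity)]
      have := hwle
      rw [hwt₀] at this
      simp only [hw] at this
      nlinarith
    simp only [hD]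
    linarith
  have hsq : Real.sqrt D ≤ (ψ t)⁻¹ := by
    have := Real.sqrt_le_sqrt hDle
    rwa [Real.sqrt_inv, Real.sqrt_sq hψt.le] at this
  rw [le_div_iff₀ (Real.sqrt_pos.2 hD0)]
  calc ψ t * Real.sqrt D ≤ ψ t * (ψ t)⁻¹ :=
        mul_le_mul_of_nonneg_left hsq hψt.le
    _ = 1 := mul_inv_cancel₀ (ne_of_gt hψt)
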